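/- Let 0 < ϰ < π/2 and Q_ϰ = {z ∈ ℂ : z ≠ 0, |arg z − π/2| ≥ ϰ, |arg z + π/2| ≥ ϰ}. Then there is C > 0 such that for all κ ∈ Q_ϰ with |κ| ≤ 1 and all l ≥ 1 with sinh(κl) ≠ 0, one has |κ e^{−κl} / sinh(κl)| ≤ C(|κ| + 1/l). -/

import Mathlib

open Complex Real

/-- Sector condition implies a lower bound on `|cos θ|`. -/
lemma sin_le_abs_cos_aux (ϰ θ : ℝ) (hϰ0 : 0 < ϰ) (hϰ : ϰ < π / 2)
    (hθ1 : -π < θ) (hθ2 : θ ≤ π)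
    (h1 : ϰ ≤ |θ - π / 2|) (h2 : ϰ ≤ |θ + π / 2|) :
    Real.sin ϰ ≤ |Real.cos θ| := by
  have hπ : (0:ℝ) < π := Real.pi_pos
  rcases le_abs.mp h1 with hA | hA
  · -- θ ≥ π/2 + ϰ
    have hmono : Real.cos θ ≤ Real.cos (π / 2 + ϰ) :=
      Real.cos_le_cos_of_nonneg_of_le_pi (by linarith) hθ2 (by linarith)
    have heq : Real.cos (π / 2 + ϰ) = -Real.sin ϰ := by
      rw [add_comm, Real.cos_add_pi_div_two]
    rw [heq] at hmono
    exact le_trans (by linarith : Real.sin ϰ ≤ -Real.cos θ) (neg_le_abs _)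
  · rcases le_abs.mp h2 with hB | hB
    · -- |θ| ≤ π/2 - ϰ
      have habs : |θ| ≤ π / 2 - ϰ := abs_le.mpr ⟨by linarith, by linarith⟩
      have hmono : Real.cos (π / 2 - ϰ) ≤ Real.cos |θ| :=
        Real.cos_le_cos_of_nonneg_of_le_pi (abs_nonneg θ) (by linarith) habs
      rw [Real.cos_pi_div_two_sub, Real.cos_abs] at hmono
      exact le_trans hmono (le_abs_self _)
    · -- θ ≤ -π/2 - ϰ
      have hmono : Real.cos (-θ) ≤ Real.cos (π / 2 + ϰ) :=
        Real.cos_le_cos_of_nonneg_of_le_pi (by linarith) (by linarith) (by linarith)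
      rw [Real.cos_neg] at hmono
      have : Real.cos (π / 2 + ϰ) = -Real.sin ϰ := by
        rw [add_comm, Real.cos_add_pi_div_two]
      rw [this] at hmono
      exact le_trans (by linarith [abs_nonneg (Real.cos θ)] : Real.sin ϰ ≤ -Real.cos θ)
        (neg_le_abs _)

theorem kappa_exp_div_sinh_bound (ϰ : ℝ) (hϰ0 : 0 < ϰ) (hϰ : ϰ < π / 2) :
    ∃ C > (0:ℝ), ∀ (κ : ℂ) (l : ℝ), κ ≠ 0 →
      ϰ ≤ |Complex.arg κ - π / 2| → ϰ ≤ |Complex.arg κ + π / 2| →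
      ‖κ‖ ≤ 1 → 1 ≤ l → Complex.sinh (κ * l) ≠ 0 →
      ‖κ * Complex.exp (-(κ * l)) / Complex.sinh (κ * l)‖ ≤
        C * (‖κ‖ + 1 / l) := by
  have hπ : (0:ℝ) < π := Real.pi_pos
  have hδ0 : 0 < Real.sin ϰ := Real.sin_pos_of_pos_of_lt_pi hϰ0 (by linarith)
  set δ := Real.sin ϰ with hδdef
  have hδ1 : δ ≤ 1 := Real.sin_le_one ϰ
  refine ⟨3 / δ, by positivity, ?_⟩
  intro κ l hκ0 h1 h2 habs hl hsinh
  have hl0 : (0:ℝ) < l := by linarith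
  set a := ‖κ‖ with hadef
  have ha : 0 < a := norm_pos_iff.mpr hκ0
  -- sector gives |Re κ| ≥ δ a
  have hcos : δ ≤ |Real.cos (Complex.arg κ)| :=
    sin_le_abs_cos_aux ϰ (Complex.arg κ) hϰ0 hϰ (Complex.neg_pi_lt_arg κ)
      (Complex.arg_le_pi κ) h1 h2
  have hre : δ * a ≤ |κ.re| := by
    have := Complex.cos_arg hκ0
    have h' : |Real.cos (Complex.arg κ)| = |κ.re| / a := by
      rw [this, abs_div, abs_of_pos ha]
    rw [h'] at hcos
    calc δ * a ≤ (|κ.re| / a) * a := by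
          exact mul_le_mul_of_nonneg_right hcos ha.le
      _ = |κ.re| := by field_simp
  -- key identity
  set z := κ * (l : ℂ) with hzdef
  have hez : Complex.exp z ≠ 0 := Complex.exp_ne_zero z
  have hsub : Complex.exp z - Complex.exp (-z) ≠ 0 := by
    intro h
    apply hsinh
    simp only [Complex.sinh, h, zero_div]
  have hexp2 : Complex.exp (2 * z) = Complex.exp z * Complex.exp z := by
    rw [two_mul, Complex.exp_add]
  have hone : Complex.exp (2 * z) - 1 ≠ 0 := by
    intro h
    apply hsub
    have h1' : Complex.exp z * Complex.exp z = 1 := by rw [← hexp2]; linear_combination h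
    have h2' : Complex.exp z * Complex.exp (-z) = 1 := by
      rw [← Complex.exp_add, add_neg_cancel, Complex.exp_zero]
    have := mul_left_cancel₀ hez (h1'.trans h2'.symm)
    linear_combination this
  have key : κ * Complex.exp (-z) / Complex.sinh z = 2 * κ / (Complex.exp (2 * z) - 1) := by
    simp only [Complex.sinh]
    rw [div_div_eq_mul_div, hexp2]
    rw [div_eq_div_iff (by simpa using hsub) (by rw [← hexp2]; exact hone)]
    have h2' : Complex.exp z * Complex.exp (-z) = 1 := by
      rw [← Complex.exp_add, add_neg_cancel, Complex.exp_zero]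
    linear_combination 2 * κ * Complex.exp z * h2'
  rw [key]
  -- pass to absolute values
  set B := ‖Complex.exp (2 * z) - 1‖ with hBdef
  have hB0 : 0 < B := norm_pos_iff.mpr hone
  have habsq : ‖2 * κ / (Complex.exp (2 * z) - 1)‖ = 2 * a / B := by
    rw [norm_div, norm_mul, Complex.norm_two]
  rw [habsq, div_le_iff₀ hB0]
  -- real part of 2z
  have hrez : (2 * z).re = 2 * κ.re * l := by
    simp [hzdef, Complex.mul_re]
    ring
  have hCnn : 0 ≤ 3 / δ * (a + 1 / l) := by positivity
  rcases le_or_gt 0 κ.re with hsgn | hsgn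
  · -- right half-plane: B ≥ 2δal
    have hre' : δ * a ≤ κ.re := by rwa [_root_.abs_of_nonneg hsgn] at hre
    have hrbig : 2 * δ * a * l ≤ (2 * z).re := by
      rw [hrez]
      have : δ * a * l ≤ κ.re * l := mul_le_mul_of_nonneg_right hre' hl0.le
      linarith
    have hexpbig : 2 * δ * a * l ≤ Real.exp ((2 * z).re) - 1 := by
      have := Real.add_one_le_exp ((2 * z).re)
      linarith
    have hBlow : 2 * δ * a * l ≤ B := by
      have htri := norm_add_le (Complex.exp (2 * z) - 1) 1
      simp only [sub_add_cancel, norm_one] at htri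
      rw [Complex.norm_exp] at htri
      linarith
    -- 2a ≤ (3/δ)(a+1/l) B  since RHS ≥ (3/δ)(1/l)(2δal) = 6a
    have hstep : 3 / δ * (1 / l) * (2 * δ * a * l) = 6 * a := by
      field_simp
      ring
    have h1' : 3 / δ * (1 / l) * (2 * δ * a * l) ≤ 3 / δ * (1 / l) * B :=
      mul_le_mul_of_nonneg_left hBlow (by positivity)
    have h2' : 3 / δ * (1 / l) * B ≤ 3 / δ * (a + 1 / l) * B := by
      have : 3 / δ * (1 / l) ≤ 3 / δ * (a + 1 / l) := by
        have : (0:ℝ) ≤ 3 / δ := by positivity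
        nlinarith
      exact mul_le_mul_of_nonneg_right this hB0.le
    rw [hstep] at h1'
    linarith
  · -- left half-plane
    have hre' : δ * a ≤ -κ.re := by
      rwa [_root_.abs_of_neg hsgn] at hre
    set t := 2 * δ * a * l with htdef
    have ht0 : 0 < t := by positivity
    have hrsmall : (2 * z).re ≤ -t := by
      rw [hrez, htdef]
      have : δ * a * l ≤ -κ.re * l := mul_le_mul_of_nonneg_right hre' hl0.le
      linarith
    -- B ≥ 1 - exp(-t)
    have hBlow : 1 - Real.exp (-t) ≤ B := by
      have htri := norm_add_le (Complex.exp (2 * z) - 1) 1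
      simp only [sub_add_cancel, norm_one] at htri
      rw [Complex.norm_exp] at htri
      have h1' : Real.exp ((2 * z).re) ≤ Real.exp (-t) := Real.exp_le_exp.mpr hrsmall
      have h2' : 1 - B ≤ Real.exp ((2 * z).re) := by
        have htri2 := norm_add_le (1 - Complex.exp (2 * z)) (Complex.exp (2 * z))
        have heq : (1 : ℂ) - Complex.exp (2 * z) + Complex.exp (2 * z) = 1 := by ring
        rw [heq, norm_one, Complex.norm_exp] at htri2
        have h3' : ‖1 - Complex.exp (2 * z)‖ = B := by
          rw [show (1:ℂ) - Complex.exp (2 * z) = -(Complex.exp (2 * z) - 1) by ring, norm_neg]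
        rw [h3'] at htri2
        linarith
      linarith
    -- (1 - e^{-t})(1+t) ≥ t
    have hexpt : 1 + t ≤ Real.exp t := by linarith [Real.add_one_le_exp t]
    have hinv : Real.exp (-t) * Real.exp t = 1 := by
      rw [← Real.exp_add, neg_add_cancel, Real.exp_zero]
    have hkey : t ≤ (1 - Real.exp (-t)) * (1 + t) := by
      have hpos : 0 < Real.exp (-t) := Real.exp_pos _
      nlinarith [mul_le_mul_of_nonneg_left hexpt hpos.le]
    have hBt : t ≤ B * (1 + t) :=
      le_trans hkey (mul_le_mul_of_nonneg_right hBlow (by positivity))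
    -- reduce to polynomial inequality: 2a(1+t) ≤ (3/δ)(a+1/l) t
    have hmain : 2 * a * (1 + t) ≤ 3 / δ * (a + 1 / l) * t := by
      have hrhs : 3 / δ * (a + 1 / l) * t = 6 * a * a * l + 6 * a := by
        rw [htdef]
        field_simp
        ring
      rw [hrhs, htdef]
      nlinarith [mul_pos (mul_pos ha ha) hl0, mul_nonneg (mul_nonneg ha.le ha.le) hl0.le,
        mul_le_mul_of_nonneg_right (mul_le_mul_of_nonneg_right hδ1 ha.le)
          (mul_nonneg ha.le hl0.le)]
    have hchain : 2 * a * (1 + t) ≤ 3 / δ * (a + 1 / l) * B * (1 + t) := by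
      calc 2 * a * (1 + t) ≤ 3 / δ * (a + 1 / l) * t := hmain
        _ ≤ 3 / δ * (a + 1 / l) * (B * (1 + t)) := mul_le_mul_of_nonneg_left hBt hCnn
        _ = 3 / δ * (a + 1 / l) * B * (1 + t) := by ring
    exact le_of_mul_le_mul_right hchain (by positivity)
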